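/- Let X ⊂ P^N be a projective variety, p = [1:0:⋯:0] ∈ X, d = d_p(X), and let f = Σ_{i=1}^{d} x_0^{d−i} f^i ∈ H^0(P^N, I_X ⊗ O_{P^N}(d)) with f^i ∈ ℂ[x_1, …, x_N] homogeneous of degree i. For 1 ≤ i ≤ d−1, let D^i ⊂ P^N be the hypersurface defined by x_0^{i−1} f^1 + ⋯ + x_0 f^{i−1} + f^i, and suppose D^i does not contain X, so that D^i|_X is an effective divisor in |O_X(i)|. Then ord_p(D^i|_X) ≥ i + 1. -/

import Mathlib

/-!
Common framework: classical projective geometry over ℂ, with projective space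
`ℙ^{n-1} = Pr n` realized as the projectivization of `ℂ^n`, algebraic subsets as
zero loci of homogeneous polynomials, lines/linear subspaces via linear subspaces,
degree and multiplicity of curves via hyperplane counting, the Seshadri constant
of `O_X(1)` at a point via the curve-infimum formula, and the invariant `d_p(X)`
via local generation of the ideal sheaf by forms of a given degree.
-/

open scoped Classical
open Function Set

noncomputable section

namespace PaperSC

/-- Projective space of lines in `ℂ^n`; `Pr (N+1)` is the usual `ℙ^N` over `ℂ`. -/
abbrev Pr (n : ℕ) := Projectivization ℂ (Fin n → ℂ)

/-- Polynomial ring in `n` variables over `ℂ` (homogeneous coordinates). -/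
abbrev Poly (n : ℕ) := MvPolynomial (Fin n) ℂ

variable {n : ℕ}

/-- A (homogeneous) polynomial vanishes at a projective point. -/
def VanishAt (f : Poly n) (x : Pr n) : Prop :=
  ∀ (v : Fin n → ℂ) (hv : v ≠ 0), Projectivization.mk ℂ v hv = x → MvPolynomial.eval v f = 0

/-- Common zero locus in projective space of a set of polynomials. -/
def zeroLocus (S : Set (Poly n)) : Set (Pr n) := {x | ∀ f ∈ S, VanishAt f x}

/-- The polynomial is homogeneous (of some degree). -/
def IsHomog (f : Poly n) : Prop := ∃ d, f.IsHomogeneous d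

/-- Zariski-closed algebraic subsets of projective space. -/
def IsAlgSet (X : Set (Pr n)) : Prop :=
  ∃ S : Set (Poly n), (∀ f ∈ S, IsHomog f) ∧ X = zeroLocus S

/-- A projective subvariety: a nonempty irreducible Zariski-closed subset. -/
def IsSubvariety (X : Set (Pr n)) : Prop :=
  IsAlgSet X ∧ X.Nonempty ∧
    ∀ A B : Set (Pr n), IsAlgSet A → IsAlgSet B → X ⊆ A ∪ B → X ⊆ A ∨ X ⊆ B

/-- Dimension of a subset of projective space: the supremum of the lengths of strict
chains of subvarieties contained in it. -/
def dim (X : Set (Pr n)) : ℕ :=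
  sSup {k | ∃ Z : Fin (k + 1) → Set (Pr n),
    (∀ i, IsSubvariety (Z i) ∧ Z i ⊆ X) ∧ StrictMono Z}

/-- A linear subvariety of projective space, given by a linear subspace of the
indicated (linear-algebra) rank. -/
def IsLinearOfRank (r : ℕ) (L : Set (Pr n)) : Prop :=
  ∃ W : Submodule ℂ (Fin n → ℂ), Module.finrank ℂ W = r ∧
    L = {x : Pr n | x.submodule ≤ W}

/-- A line in projective space (projective curve of degree 1). -/
def IsLine (L : Set (Pr n)) : Prop := IsLinearOfRank 2 L

/-- A hyperplane in `Pr n = ℙ^{n-1}`. -/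
def IsHyperplane (H : Set (Pr n)) : Prop := IsLinearOfRank (n - 1) H

/-- A projective curve: a subvariety of dimension 1. -/
def IsCurve (C : Set (Pr n)) : Prop := IsSubvariety C ∧ dim C = 1

/-- Degree of a (reduced irreducible) curve in projective space: the maximal number of
points in which a hyperplane not containing it meets it. -/
def degCurve (C : Set (Pr n)) : ℕ :=
  sSup {k | ∃ H, IsHyperplane H ∧ ¬ C ⊆ H ∧ k = (C ∩ H).ncard}

/-- Multiplicity of a curve at a point `p`: `deg C` minus the maximal number of points
away from `p` in which a hyperplane through `p` (not containing `C`) meets `C`. -/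
def multAt (C : Set (Pr n)) (p : Pr n) : ℕ :=
  degCurve C -
    sSup {k | ∃ H, IsHyperplane H ∧ p ∈ H ∧ ¬ C ⊆ H ∧ k = ((C ∩ H) \ {p}).ncard}

/-- The Seshadri constant `ε(X, O_X(1); p)`: the infimum of `deg C / mult_p C` over
reduced irreducible curves `C ⊆ X` through `p`. -/
def seshadri (X : Set (Pr n)) (p : Pr n) : ℝ :=
  sInf {r : ℝ | ∃ C : Set (Pr n), IsCurve C ∧ C ⊆ X ∧ p ∈ C ∧
    r = (degCurve C : ℝ) / (multAt C p : ℝ)}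

/-- `F_p(X)`: the set of lines on `X` passing through `p`. -/
def linesThrough (X : Set (Pr n)) (p : Pr n) : Set (Set (Pr n)) :=
  {L | IsLine L ∧ L ⊆ X ∧ p ∈ L}

/-- The cone `Cone F_p(X)` with vertex `p` over the lines of `X` through `p`. -/
def coneOfLines (X : Set (Pr n)) (p : Pr n) : Set (Pr n) :=
  {p} ∪ ⋃ L ∈ linesThrough X p, L

/-- Degree of a projective variety `X`: the maximal (finite) number of points in which a
linear subvariety of complementary dimension meets `X`. -/
def degVar (X : Set (Pr n)) : ℕ :=
  sSup {k | ∃ L, IsLinearOfRank (n - dim X) L ∧ (X ∩ L).Finite ∧ k = (X ∩ L).ncard}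

/-- Dehomogenization in the affine chart `x_i ≠ 0` (substitute `x_i = 1`). -/
def subst1 (i : Fin n) : Poly n →ₐ[ℂ] Poly n :=
  MvPolynomial.aeval (Function.update MvPolynomial.X i 1)

/-- Affine coordinates of a projective point in the chart `x_i ≠ 0`. -/
def acoord (i : Fin n) (p : Pr n) : Fin n → ℂ := fun j => p.rep j / p.rep i

/-- The maximal ideal of the point with affine coordinates `a`. -/
def mIdeal (a : Fin n → ℂ) : Ideal (Poly n) :=
  Ideal.span (Set.range fun j => MvPolynomial.X j - MvPolynomial.C (a j))

/-- Homogeneous polynomials of degree `d` vanishing on `X`,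
i.e. `H^0(ℙ^{n-1}, I_X ⊗ O(d))`. -/
def homVan (X : Set (Pr n)) (d : ℕ) : Set (Poly n) :=
  {f | f.IsHomogeneous d ∧ ∀ x ∈ X, VanishAt f x}

/-- All homogeneous polynomials vanishing on `X`. -/
def vanPolys (X : Set (Pr n)) : Set (Poly n) := ⋃ d, homVan X d

/-- The homogeneous ideal of `X`. -/
def homIdeal (X : Set (Pr n)) : Ideal (Poly n) := Ideal.span (vanPolys X)

/-- The affine ideal of `X` in the chart `x_i ≠ 0`. -/
def affIdeal (i : Fin n) (X : Set (Pr n)) : Ideal (Poly n) :=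
  Ideal.span (⇑(subst1 i) '' vanPolys X)

/-- `X` is cut out scheme-theoretically at `p` by hypersurfaces of degree `d`:
the stalk at `p` of the ideal sheaf `I_X` is generated by the degree-`d` forms
vanishing on `X`, i.e. the natural map
`H^0(ℙ^N, I_X ⊗ O(d)) ⊗ O → I_X ⊗ O(d)` is surjective at `p`. -/
def CutOutAt (X : Set (Pr n)) (p : Pr n) (d : ℕ) : Prop :=
  ∀ f ∈ vanPolys X, ∃ (i : Fin n) (s : Poly n), p.rep i ≠ 0 ∧
    MvPolynomial.eval (acoord i p) s ≠ 0 ∧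
    s * subst1 i f ∈ Ideal.span (⇑(subst1 i) '' homVan X d)

/-- `d_p(X)`: the least degree `d` such that `X` is cut out at `p` by degree-`d`
hypersurfaces. -/
def dP (X : Set (Pr n)) (p : Pr n) : ℕ := sInf {d | CutOutAt X p d}

/-- `ord_p` of the effective divisor cut on `X` by the homogeneous polynomial `f`:
the largest `m` with the local equation of `f` lying in `m_p^m ⊆ O_{X,p}`. -/
def ordAt (X : Set (Pr n)) (p : Pr n) (f : Poly n) : ℕ :=
  sSup {m | ∃ (i : Fin n) (s : Poly n), p.rep i ≠ 0 ∧
    MvPolynomial.eval (acoord i p) s ≠ 0 ∧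
    s * subst1 i f ∈ mIdeal (acoord i p) ^ m ⊔ affIdeal i X}

/-- Differential of a polynomial at the affine point `a`. -/
def diffAt (a : Fin n → ℂ) (g : Poly n) : (Fin n → ℂ) →ₗ[ℂ] ℂ :=
  ∑ j : Fin n, MvPolynomial.eval a (MvPolynomial.pderiv j g) • LinearMap.proj j

/-- Zariski tangent space of `X` at `p`, computed in the chart `x_i ≠ 0` (it contains the
one extra "dummy" direction of the substituted variable). -/
def tangentAt (X : Set (Pr n)) (i : Fin n) (p : Pr n) : Submodule ℂ (Fin n → ℂ) :=
  ⨅ f ∈ vanPolys X, LinearMap.ker (diffAt (acoord i p) (subst1 i f))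

/-- Smoothness of `X` at `p` (Jacobian criterion). -/
def IsSmoothPt (X : Set (Pr n)) (p : Pr n) : Prop :=
  ∃ i : Fin n, p.rep i ≠ 0 ∧ Module.finrank ℂ ↥(tangentAt X i p) = dim X + 1

/-- A smooth projective set. -/
def IsSmooth (X : Set (Pr n)) : Prop := ∀ p ∈ X, IsSmoothPt X p

/-- `P` holds for a general point of `X`: it holds away from a proper closed subset. -/
def GeneralPt (X : Set (Pr n)) (P : Pr n → Prop) : Prop :=
  ∃ Z : Set (Pr n), IsAlgSet Z ∧ ¬ X ⊆ Z ∧ ∀ p ∈ X \ Z, P p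

/-- The coordinate vector of the point `[1:0:⋯:0]`. -/
def e0vec (n : ℕ) : Fin (n + 1) → ℂ := Fin.cons 1 0

lemma e0vec_ne (n : ℕ) : e0vec n ≠ 0 := by
  intro h
  simpa [e0vec] using congrFun h 0

/-- The point `p = [1:0:⋯:0] ∈ ℙ^n`. -/
def pt0 (n : ℕ) : Pr (n + 1) := Projectivization.mk ℂ (e0vec n) (e0vec_ne n)

/-- The line through `[1:0:⋯:0]` with direction `u ∈ ℙ^{n-1}`; this realizes the
identification `F_p(ℙ^n) ≅ ℙ^{n-1} = Proj ℂ[x_1,…,x_n]`. -/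
def dirLine (u : Pr n) : Set (Pr (n + 1)) :=
  {x | x.submodule ≤ Submodule.span ℂ
    ({Fin.cons 1 0, Fin.cons 0 u.rep} : Set (Fin (n + 1) → ℂ))}

/-- Embedding `ℂ[x_1,…,x_n] → ℂ[x_0,x_1,…,x_n]`. -/
def emb : Poly n →ₐ[ℂ] Poly (n + 1) := MvPolynomial.rename Fin.succ

/-- An effective Cartier divisor on `X ⊆ ℙ^{n-1}`, given by local equations
`num a / den a` (ratios of homogeneous forms of equal degrees) on an open cover of `X`,
whose numerators are local nonzerodivisors and which agree up to units on overlaps. -/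
structure EffCartier (n : ℕ) (X : Set (Pr n)) where
  idx : Type
  U : idx → Set (Pr n)
  isOpen : ∀ a, ∃ Z, IsAlgSet Z ∧ U a = X \ Z
  covers : ∀ x ∈ X, ∃ a, x ∈ U a
  num : idx → Poly n
  den : idx → Poly n
  deg_eq : ∀ a, ∃ d, (num a).IsHomogeneous d ∧ (den a).IsHomogeneous d
  den_ne : ∀ a, ∀ x ∈ U a, ¬ VanishAt (den a) x
  regular : ∀ a, ∀ q ∈ U a, ∀ i : Fin n, q.rep i ≠ 0 →
    ∀ g s : Poly n, MvPolynomial.eval (acoord i q) s ≠ 0 →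
      s * g * subst1 i (num a) ∈ affIdeal i X →
      ∃ t : Poly n, MvPolynomial.eval (acoord i q) t ≠ 0 ∧ t * g ∈ affIdeal i X
  compat : ∀ a b, ∀ q, q ∈ U a → q ∈ U b → ∀ i : Fin n, q.rep i ≠ 0 →
    ∃ s : Poly n, MvPolynomial.eval (acoord i q) s ≠ 0 ∧
      s * subst1 i (num a * den b) ∈
        Ideal.span {subst1 i (num b * den a)} ⊔ affIdeal i X

namespace EffCartier

variable {n : ℕ} {X : Set (Pr n)}

/-- Support of the divisor. -/
def supp (D : EffCartier n X) : Set (Pr n) :=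
  {x | x ∈ X ∧ ∃ a, x ∈ D.U a ∧ VanishAt (D.num a) x}

/-- `ord_p(D)`: the largest `m` such that a local equation of `D` lies in `m_p^m`. -/
def ordAtPt (D : EffCartier n X) (p : Pr n) : ℕ :=
  sSup {m | ∃ a, p ∈ D.U a ∧ ∃ (i : Fin n) (s : Poly n), p.rep i ≠ 0 ∧
    MvPolynomial.eval (acoord i p) s ≠ 0 ∧
    s * subst1 i (D.num a) ∈ mIdeal (acoord i p) ^ m ⊔ affIdeal i X}

/-- Local intersection multiplicity of `D` with the curve `C` at `q`:
`dim_ℂ O_{C,q}/(local equation)`, computed as the stabilized value of the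
finite-dimensional truncations. -/
def locMult (D : EffCartier n X) (C : Set (Pr n)) (q : Pr n) : ℕ :=
  sSup {m | ∃ (a : D.idx) (i : Fin n) (M : ℕ), q ∈ D.U a ∧ q.rep i ≠ 0 ∧
    m = Module.finrank ℂ
      (Poly n ⧸ (Ideal.span {subst1 i (D.num a)} ⊔ affIdeal i C ⊔
        mIdeal (acoord i q) ^ M))}

/-- The intersection number `C · D`: the sum of local intersection multiplicities. -/
def inter (D : EffCartier n X) (C : Set (Pr n)) : ℕ :=
  ∑ᶠ q ∈ C ∩ D.supp, D.locMult C q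

end EffCartier

/-- A conic: a smooth projective curve of degree 2. -/
def IsConic (C : Set (Pr n)) : Prop := IsCurve C ∧ degCurve C = 2 ∧ IsSmooth C

/-- Rows of a matrix-shaped tuple. -/
def row {a b : ℕ} (t : Fin a × Fin b → ℂ) (i : Fin a) : Fin b → ℂ := fun j => t (i, j)

/-- The image of the degree-2 parametrization `[s:u] ↦ s²t₀ + su t₁ + u²t₂`; for linearly
independent `t₀,t₁,t₂` this is exactly a conic, and all conics arise this way. -/
def conicOf (t : Fin 3 × Fin n → ℂ) : Set (Pr n) :=
  {x | ∃ s u : ℂ,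
    ∃ h : (s ^ 2 • row t 0 + (s * u) • row t 1 + u ^ 2 • row t 2) ≠ 0,
      Projectivization.mk ℂ (s ^ 2 • row t 0 + (s * u) • row t 1 + u ^ 2 • row t 2) h = x}

/-- Parameter space of (parametrized) conics on `Y` through `p`. Two parameters give the
same conic exactly along an orbit of the 4-dimensional group `GL₂(ℂ) × scalings`, so
`dim R_p(Y) = affDim (conicParams Y p) - 4`. -/
def conicParams (Y : Set (Pr n)) (p : Pr n) : Set (Fin 3 × Fin n → ℂ) :=
  {t | LinearIndependent ℂ (row t) ∧ conicOf t ⊆ Y ∧ p ∈ conicOf t}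

/-- Affine algebraic subsets of an affine space `ι → ℂ`. -/
def AffAlg {ι : Type} (S : Set (ι → ℂ)) : Prop :=
  ∃ T : Set (MvPolynomial ι ℂ), S = {a | ∀ f ∈ T, MvPolynomial.eval a f = 0}

/-- Affine varieties: nonempty irreducible affine algebraic sets. -/
def AffVariety {ι : Type} (S : Set (ι → ℂ)) : Prop :=
  AffAlg S ∧ S.Nonempty ∧
    ∀ A B : Set (ι → ℂ), AffAlg A → AffAlg B → S ⊆ A ∪ B → S ⊆ A ∨ S ⊆ B

/-- Zariski closure in affine space. -/
def aclosure {ι : Type} (S : Set (ι → ℂ)) : Set (ι → ℂ) :=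
  ⋂₀ {Z | AffAlg Z ∧ S ⊆ Z}

/-- Dimension of a subset of affine space, via chains of subvarieties of its closure. -/
def affDim {ι : Type} (S : Set (ι → ℂ)) : ℕ :=
  sSup {k | ∃ Z : Fin (k + 1) → Set (ι → ℂ),
    (∀ i, AffVariety (Z i) ∧ Z i ⊆ aclosure S) ∧ StrictMono Z}

/-- An irreducible component of (the closure of) `S`. -/
def IsAffComponent {ι : Type} (T S : Set (ι → ℂ)) : Prop :=
  AffVariety T ∧ T ⊆ aclosure S ∧
    ∀ T' : Set (ι → ℂ), AffVariety T' → T' ⊆ aclosure S → T ⊆ T' → T = T'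

/-- `P` holds for a general element of `S ⊆ (ι → ℂ)`. -/
def GeneralAff {ι : Type} (S : Set (ι → ℂ)) (P : (ι → ℂ) → Prop) : Prop :=
  ∃ Z : Set (ι → ℂ), AffAlg Z ∧ ¬ S ⊆ Z ∧ ∀ w ∈ S \ Z, P w

/-- The linear form with coefficient vector `w`. -/
def linForm (w : Fin n → ℂ) : Poly n :=
  ∑ j : Fin n, MvPolynomial.C (w j) * MvPolynomial.X j

/-- The hyperplane with coefficient vector `w`. -/
def hypOf (w : Fin n → ℂ) : Set (Pr n) := zeroLocus {linForm w}

/-- `I_Y ⊗ O(d)` is globally generated: at every point the stalk of the ideal sheaf of `Y`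
is generated by the degree-`d` forms vanishing on `Y`. -/
def SheafGenByDeg (Y : Set (Pr n)) (d : ℕ) : Prop :=
  ∀ q : Pr n, ∀ f ∈ vanPolys Y, ∃ (i : Fin n) (s : Poly n), q.rep i ≠ 0 ∧
    MvPolynomial.eval (acoord i q) s ≠ 0 ∧
    s * subst1 i f ∈ Ideal.span (⇑(subst1 i) '' homVan Y d)

/-- Surjectivity of `H^0(ℙ^N, I_C ⊗ O(1)) ⊗ O_Y → I_{C/Y} ⊗ O_Y(1)`: at every point of
`Y`, the stalk of `I_{C/Y}` is generated by the linear forms vanishing on `C`. -/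
def LinearCutOnY (Y C : Set (Pr n)) : Prop :=
  ∀ q ∈ Y, ∀ f ∈ vanPolys C, ∃ (i : Fin n) (s : Poly n), q.rep i ≠ 0 ∧
    MvPolynomial.eval (acoord i q) s ≠ 0 ∧
    s * subst1 i f ∈ Ideal.span (⇑(subst1 i) '' homVan C 1) ⊔ affIdeal i Y

/-- The projective transformation induced by a linear automorphism. -/
def pmap (g : (Fin n → ℂ) ≃ₗ[ℂ] (Fin n → ℂ)) : Pr n → Pr n :=
  Projectivization.map g.toLinearMap g.injective

/-- `Y` is a homogeneous space: the projective transformations preserving `Y` act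
transitively on `Y`. -/
def IsHomogSpace (Y : Set (Pr n)) : Prop :=
  ∀ p ∈ Y, ∀ q ∈ Y, ∃ g : (Fin n → ℂ) ≃ₗ[ℂ] (Fin n → ℂ),
    pmap g '' Y = Y ∧ pmap g p = q

/-- `Y ⊆ ℙ^N` is a rational homogeneous space of Picard number one, embedded by the ample
generator of its Picard group: a smooth homogeneous subvariety, every prime divisor of
which is (set-theoretically) a hypersurface section (Picard number one), carrying a line
(which forces the embedding to be by the ample generator and rules out abelian factors). -/
def IsRatHomog1 (Y : Set (Pr n)) : Prop :=
  IsSubvariety Y ∧ IsSmooth Y ∧ IsHomogSpace Y ∧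
    (∀ D : Set (Pr n), IsSubvariety D → D ⊆ Y → dim D + 1 = dim Y →
      ∃ g : Poly n, IsHomog g ∧ D = Y ∩ zeroLocus {g}) ∧
    ∃ p ∈ Y, (linesThrough Y p).Nonempty

/-- The Fano index `i(Y)` of a rational homogeneous space `Y` of Picard number one
embedded by the ample generator, characterized geometrically by
`dim F_p(Y) = i(Y) - 2`, i.e. `i(Y) = dim (Cone F_p(Y)) + 1`. -/
def fanoIndex (Y : Set (Pr n)) : ℕ :=
  sSup {k | ∃ p ∈ Y, k = dim (coneOfLines Y p) + 1}

/-- A polynomial function (in the coefficients) on tuples of polynomials. -/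
def IsPolyFun {κ : Type} {m : ℕ} (Φ : (κ → Poly m) → ℂ) : Prop :=
  ∃ F : MvPolynomial ((Fin m →₀ ℕ) × κ) ℂ, ∀ g,
    Φ g = MvPolynomial.eval (fun mc => MvPolynomial.coeff mc.1 (g mc.2)) F

/-- `P` holds for a general tuple of polynomials satisfying the shape condition `Q`:
there is a polynomial function in the coefficients, not identically zero on tuples
satisfying `Q`, whose nonvanishing implies `P`. -/
def GeneralTuple {κ : Type} {m : ℕ} (Q P : (κ → Poly m) → Prop) : Prop :=
  ∃ Φ : (κ → Poly m) → ℂ, IsPolyFun Φ ∧ (∃ g, Q g ∧ Φ g ≠ 0) ∧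
    ∀ g, Q g → Φ g ≠ 0 → P g

/-- The homogeneous coordinate ring of `C`. -/
abbrev CoordRing (C : Set (Pr n)) := Poly n ⧸ homIdeal C

/-- The ring whose graded pieces carry the conormal module `I_C/(I_C² + I_X)` of `C ⊆ X`. -/
abbrev ConormalRing (X C : Set (Pr n)) :=
  Poly n ⧸ (homIdeal C * homIdeal C ⊔ homIdeal X)

/-- Degree-`d` graded piece of the coordinate ring of `C`. -/
def coordGrade (C : Set (Pr n)) (d : ℕ) : Submodule ℂ (CoordRing C) :=
  Submodule.span ℂ (⇑(Ideal.Quotient.mk (homIdeal C)) ''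
    {f : Poly n | f.IsHomogeneous d})

/-- Degree-`d` graded piece of the conormal module `N^∨_{C/X} = I_C/(I_C² + I_X)`. -/
def conormalGrade (X C : Set (Pr n)) (d : ℕ) : Submodule ℂ (ConormalRing X C) :=
  Submodule.span ℂ (⇑(Ideal.Quotient.mk (homIdeal C * homIdeal C ⊔ homIdeal X)) ''
    homVan C d)

/-- The normal bundle `N_{C/X}` is trivial of rank `k` : equivalently its dual, the
conormal sheaf — the sheafification of the graded module `I_C/(I_C²+I_X)` — is isomorphic
to `O_C^k`, i.e. in all large degrees the graded conormal module is isomorphic, as a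
graded module over the coordinate ring of `C` (generated in degree one), to
(the truncation of) the free module `(S_C)^k`. -/
def ConormalTrivial (X C : Set (Pr n)) (k : ℕ) : Prop :=
  ∃ e0 : ℕ,
    ∃ ψ : ∀ d : ℕ, e0 ≤ d → ((Fin k → ↥(coordGrade C d)) ≃ₗ[ℂ] ↥(conormalGrade X C d)),
      ∀ (d : ℕ) (hd : e0 ≤ d) (h : Poly n), h.IsHomogeneous 1 →
        ∀ (x : Fin k → ↥(coordGrade C d)) (y : Fin k → ↥(coordGrade C (d + 1))),
          (∀ j, (y j : CoordRing C) =
            Ideal.Quotient.mk (homIdeal C) h * (x j : CoordRing C)) →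
          ((ψ (d + 1) (hd.trans (Nat.le_succ d)) y : ConormalRing X C) =
            Ideal.Quotient.mk (homIdeal C * homIdeal C ⊔ homIdeal X) h *
              (ψ d hd x : ConormalRing X C))

end PaperSC

namespace PaperSC

open MvPolynomial


variable {N : ℕ}

lemma pt0_rep_exists (N : ℕ) : ∃ c : ℂˣ, (pt0 N).rep = (c : ℂ) • e0vec N := by
  have h : Projectivization.mk ℂ (pt0 N).rep (Projectivization.rep_nonzero _) = pt0 N :=
    Projectivization.mk_rep _
  rw [pt0, Projectivization.mk_eq_mk_iff] at h
  obtain ⟨c, hc⟩ := h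
  exact ⟨c, hc.symm⟩

lemma acoord_pt0 (N : ℕ) : acoord 0 (pt0 N) = e0vec N := by
  obtain ⟨c, hc⟩ := pt0_rep_exists N
  funext j
  simp only [acoord, hc, Pi.smul_apply, smul_eq_mul]
  have h0 : e0vec N 0 = 1 := rfl
  rcases Fin.eq_zero_or_eq_succ j with rfl | ⟨j', rfl⟩
  · simp [h0, div_self (Units.ne_zero c)]
  · have : e0vec N j'.succ = 0 := by simp [e0vec]
    simp [this, h0]

lemma pt0_rep_zero_ne (N : ℕ) : (pt0 N).rep 0 ≠ 0 := by
  obtain ⟨c, hc⟩ := pt0_rep_exists N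
  simp [hc, e0vec, Units.ne_zero c]

lemma pt0_rep_succ (N : ℕ) (j : Fin N) : (pt0 N).rep j.succ = 0 := by
  obtain ⟨c, hc⟩ := pt0_rep_exists N
  simp [hc, e0vec]

lemma subst1_X_of_ne {n : ℕ} {j i : Fin n} (h : j ≠ i) :
    subst1 i (X j : Poly n) = X j := by
  simp [subst1, Function.update_of_ne h]

lemma subst1_X_self {n : ℕ} (i : Fin n) : subst1 i (X i : Poly n) = 1 := by
  simp [subst1]

lemma eval_subst1 (v : Fin (N + 1) → ℂ) (h : Poly (N + 1)) :
    eval v (subst1 0 h) = eval (Function.update v 0 1) h := by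
  induction h using MvPolynomial.induction_on with
  | C c => simp [subst1]
  | add p q hp hq => simp [map_add, hp, hq]
  | mul_X p j hp =>
    rcases eq_or_ne j 0 with rfl | hj
    · simp [map_mul, hp, subst1_X_self, Function.update_self]
    · simp [map_mul, hp, subst1_X_of_ne hj, Function.update_of_ne hj]

lemma eval_subst1_of_one {v : Fin (N + 1) → ℂ} (hv : v 0 = 1) (h : Poly (N + 1)) :
    eval v (subst1 0 h) = eval v h := by
  rw [eval_subst1]
  have e : Function.update v 0 1 = v := by
    funext j
    rcases eq_or_ne j 0 with rfl | hj
    · simp [hv]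
    · simp [Function.update_of_ne hj]
  rw [e]

lemma mem_mIdeal_of_eval {n : ℕ} (a : Fin n → ℂ) (s : Poly n) :
    s - C (eval a s) ∈ mIdeal a := by
  induction s using MvPolynomial.induction_on with
  | C c => simp
  | add p q hp hq =>
    have e : p + q - C (MvPolynomial.eval a (p + q)) =
        (p - C (MvPolynomial.eval a p)) + (q - C (MvPolynomial.eval a q)) := by
      rw [map_add, map_add]; ring
    rw [e]; exact Ideal.add_mem _ hp hq
  | mul_X p j hp =>
    have e : p * X j - C (MvPolynomial.eval a (p * X j)) =
        (p - C (MvPolynomial.eval a p)) * X j + C (MvPolynomial.eval a p) * (X j - C (a j)) := by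
      rw [map_mul, eval_X, map_mul]; ring
    rw [e]
    exact Ideal.add_mem _ (Ideal.mul_mem_right _ _ hp)
      (Ideal.mul_mem_left _ _ (Ideal.subset_span ⟨j, rfl⟩))

lemma eval_eq_zero_of_mem_mIdeal {n : ℕ} {a : Fin n → ℂ} {s : Poly n}
    (h : s ∈ mIdeal a) : eval a s = 0 := by
  have : mIdeal a ≤ RingHom.ker (MvPolynomial.eval a) := by
    rw [mIdeal, Ideal.span_le]
    rintro _ ⟨j, rfl⟩
    simp [RingHom.mem_ker]
  simpa [RingHom.mem_ker] using this h

lemma mem_mIdeal_iff {n : ℕ} {a : Fin n → ℂ} {s : Poly n} :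
    s ∈ mIdeal a ↔ eval a s = 0 := by
  refine ⟨eval_eq_zero_of_mem_mIdeal, fun h => ?_⟩
  have := mem_mIdeal_of_eval a s
  rwa [h, map_zero, sub_zero] at this

lemma mIdeal_eq_ker {n : ℕ} (a : Fin n → ℂ) :
    mIdeal a = RingHom.ker (MvPolynomial.eval a) := by
  ext s; simp [mem_mIdeal_iff, RingHom.mem_ker]

lemma mIdeal_isMaximal {n : ℕ} (a : Fin n → ℂ) : (mIdeal a).IsMaximal := by
  rw [mIdeal_eq_ker]
  exact RingHom.ker_isMaximal_of_surjective _ (fun c => ⟨C c, eval_C _⟩)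
lemma prod_pow_mem_pow {R ι : Type*} [CommRing R] (J : Ideal R) (t : Finset ι)
    (x : ι → R) (e : ι → ℕ) (hx : ∀ j ∈ t, x j ∈ J) :
    (∏ j ∈ t, x j ^ e j) ∈ J ^ (∑ j ∈ t, e j) := by
  classical
  induction t using Finset.induction with
  | empty => simp [Ideal.one_eq_top]
  | @insert a t ha ih =>
    rw [Finset.prod_insert ha, Finset.sum_insert ha, pow_add]
    exact Ideal.mul_mem_mul (Ideal.pow_mem_pow (hx a (Finset.mem_insert_self _ _)) _)
      (ih fun j hj => hx j (Finset.mem_insert_of_mem hj))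

lemma weight_one_eq {n : ℕ} (u : Fin n →₀ ℕ) :
    (Finsupp.weight 1 u : ℕ) = ∑ j ∈ u.support, u j := by
  simp [Finsupp.weight_apply, Finsupp.sum]

lemma homog_mem_pow {n k : ℕ} {f : Poly n} (hf : f.IsHomogeneous k) :
    f ∈ (Ideal.span (Set.range (X : Fin n → Poly n))) ^ k := by
  classical
  rw [f.as_sum]
  apply Ideal.sum_mem
  intro u hu
  have hdeg : ∑ j ∈ u.support, u j = k := by
    rw [← weight_one_eq]
    exact hf (mem_support_iff.mp hu)
  rw [monomial_eq]
  apply Ideal.mul_mem_left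
  have : (u.prod fun j e => (X j : Poly n) ^ e) = ∏ j ∈ u.support, (X j : Poly n) ^ u j :=
    rfl
  rw [this, ← hdeg]
  exact prod_pow_mem_pow _ _ _ _ fun j _ => Ideal.subset_span ⟨j, rfl⟩

lemma emb_homog_mem_pow {k : ℕ} {f : Poly N} (hf : f.IsHomogeneous k) :
    emb f ∈ (mIdeal (e0vec N)) ^ k := by
  have h1 := homog_mem_pow hf
  have h2 : emb f ∈ Ideal.map (emb : Poly N →ₐ[ℂ] Poly (N + 1))
      ((Ideal.span (Set.range (X : Fin N → Poly N))) ^ k) :=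
    Ideal.mem_map_of_mem _ h1
  rw [Ideal.map_pow] at h2
  refine Ideal.pow_right_mono ?_ k h2
  rw [Ideal.map_span]
  rw [Ideal.span_le]
  rintro _ ⟨_, ⟨j, rfl⟩, rfl⟩
  have : emb (X j : Poly N) = (X j.succ : Poly (N + 1)) := by
    simp [emb]
  rw [this]
  have h0 : e0vec N j.succ = 0 := by simp [e0vec]
  have : (X j.succ : Poly (N + 1)) = X j.succ - C (e0vec N j.succ) := by
    rw [h0]; simp
  rw [this]
  exact Ideal.subset_span ⟨j.succ, rfl⟩

lemma isHomog_eval_smul {n k : ℕ} {f : Poly n} (hf : f.IsHomogeneous k) (c : ℂ)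
    (v : Fin n → ℂ) : MvPolynomial.eval (c • v) f = c ^ k * MvPolynomial.eval v f := by
  rw [eval_eq, eval_eq, Finset.mul_sum]
  apply Finset.sum_congr rfl
  intro u hu
  have hdeg : ∑ j ∈ u.support, u j = k := by
    rw [← weight_one_eq]; exact hf (mem_support_iff.mp hu)
  have : ∏ j ∈ u.support, (c • v) j ^ u j
      = c ^ k * ∏ j ∈ u.support, v j ^ u j := by
    rw [← hdeg, ← Finset.prod_pow_eq_pow_sum]
    rw [← Finset.prod_mul_distrib]
    apply Finset.prod_congr rfl
    intro j _
    simp [mul_pow]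
  rw [this]; ring
/-- Homogenization of `s` with respect to the variable `0`, to degree `totalDegree s`. -/
def homog0 (s : Poly (N + 1)) : Poly (N + 1) :=
  ∑ u ∈ s.support, monomial (u + Finsupp.single 0 (s.totalDegree - ∑ j ∈ u.support, u j))
    (coeff u s)

lemma homog0_isHomogeneous (s : Poly (N + 1)) :
    (homog0 s).IsHomogeneous s.totalDegree := by
  apply MvPolynomial.IsHomogeneous.sum
  intro u hu
  apply isHomogeneous_monomial
  have hle : (∑ j ∈ u.support, u j) ≤ s.totalDegree := by
    have := MvPolynomial.le_totalDegree hu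
    simpa [Finsupp.sum] using this
  have : (Finsupp.weight 1 (u + Finsupp.single 0 (s.totalDegree - ∑ j ∈ u.support, u j)) : ℕ)
      = s.totalDegree := by
    rw [map_add, weight_one_eq]
    have hsing : (Finsupp.weight 1 (Finsupp.single (0 : Fin (N+1))
        (s.totalDegree - ∑ j ∈ u.support, u j)) : ℕ)
        = s.totalDegree - ∑ j ∈ u.support, u j := by
      rw [Finsupp.weight_apply, Finsupp.sum_single_index (by simp)]
      simp
    rw [hsing]
    omega
  rw [Finsupp.degree_eq_weight_one]
  exact this

lemma homog0_eval_of_one {w : Fin (N + 1) → ℂ} (hw : w 0 = 1) (s : Poly (N + 1)) :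
    MvPolynomial.eval w (homog0 s) = MvPolynomial.eval w s := by
  rw [homog0, map_sum]
  conv_rhs => rw [s.as_sum, map_sum]
  apply Finset.sum_congr rfl
  intro u _
  rw [eval_monomial, eval_monomial]
  congr 1
  rw [Finsupp.prod_add_index' (fun a => pow_zero (w a)) (fun a b₁ b₂ => pow_add (w a) b₁ b₂)]
  have h1 : ((Finsupp.single (0 : Fin (N + 1)) (s.totalDegree - ∑ j ∈ u.support, u j)).prod
      fun a e => w a ^ e) = 1 := by
    rw [Finsupp.prod_single_index (h := fun a e => w a ^ e) (by simp), hw, one_pow]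
  rw [h1, mul_one]
set_option synthInstance.maxHeartbeats 1000000 in
set_option maxHeartbeats 1000000 in
lemma krull_extract {n : ℕ} (P I' : Ideal (Poly n)) (hP : P.IsMaximal) (G : Poly n)
    (h : ∀ m : ℕ, ∃ s, s ∉ P ∧ s * G ∈ P ^ m ⊔ I') :
    ∃ s, s ∉ P ∧ s * G ∈ I' := by
  haveI : P.IsPrime := hP.isPrime
  set Rp := Localization.AtPrime P
  have hNoeth : IsNoetherianRing Rp :=
    IsLocalization.isNoetherianRing P.primeCompl Rp inferInstance
  set K : Ideal Rp := I'.map (algebraMap (Poly n) Rp) with hK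
  set J : Ideal Rp := IsLocalRing.maximalIdeal Rp with hJ
  haveI : Module.Finite Rp (Rp ⧸ K) :=
    Module.Finite.of_surjective (Ideal.Quotient.mkₐ Rp K).toLinearMap
      (Ideal.Quotient.mk_surjective)
  have hGm : ∀ m : ℕ, (Ideal.Quotient.mk K (algebraMap (Poly n) Rp G)) ∈
      (J ^ m • ⊤ : Submodule Rp (Rp ⧸ K)) := by
    intro m
    obtain ⟨s, hs, hsG⟩ := h m
    have h1 : algebraMap (Poly n) Rp (s * G) ∈ J ^ m ⊔ K := by
      have := Ideal.mem_map_of_mem (algebraMap (Poly n) Rp) hsG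
      rwa [Ideal.map_sup, Ideal.map_pow, Localization.AtPrime.map_eq_maximalIdeal] at this
    have hu : IsUnit (algebraMap (Poly n) Rp s) :=
      IsLocalization.map_units Rp (⟨s, hs⟩ : P.primeCompl)
    have h2 : algebraMap (Poly n) Rp G ∈ J ^ m ⊔ K := by
      obtain ⟨u, hu⟩ := hu
      have : algebraMap (Poly n) Rp G =
          (↑u⁻¹ : Rp) * algebraMap (Poly n) Rp (s * G) := by
        rw [map_mul, ← hu, ← mul_assoc, Units.inv_mul, one_mul]
      rw [this]
      exact Ideal.mul_mem_left _ _ h1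
    obtain ⟨y, hy, z, hz, hyz⟩ := Submodule.mem_sup.mp h2
    have hmkz : Ideal.Quotient.mk K z = 0 := by
      rwa [Ideal.Quotient.eq_zero_iff_mem]
    have : Ideal.Quotient.mk K (algebraMap (Poly n) Rp G) = Ideal.Quotient.mk K y := by
      rw [← hyz, (Ideal.Quotient.mk K).map_add, hmkz, add_zero]
    rw [this]
    have : Ideal.Quotient.mk K y = y • (1 : Rp ⧸ K) := by
      have h1 : (1 : Rp ⧸ K) = Submodule.Quotient.mk (1 : Rp) := rfl
      rw [h1, ← Submodule.Quotient.mk_smul, smul_eq_mul, mul_one]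
      rfl
    rw [this]
    exact Submodule.smul_mem_smul hy Submodule.mem_top
  have hbot : (⨅ m : ℕ, (J ^ m • ⊤ : Submodule Rp (Rp ⧸ K))) = ⊥ :=
    Ideal.iInf_pow_smul_eq_bot_of_isLocalRing (I := J) (M := Rp ⧸ K)
      (Ideal.IsMaximal.ne_top (IsLocalRing.maximalIdeal.isMaximal Rp))
  have hG0 : Ideal.Quotient.mk K (algebraMap (Poly n) Rp G) = 0 := by
    have : Ideal.Quotient.mk K (algebraMap (Poly n) Rp G) ∈
        (⨅ m : ℕ, (J ^ m • ⊤ : Submodule Rp (Rp ⧸ K))) :=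
      Submodule.mem_iInf _ |>.mpr hGm
    rw [hbot] at this
    simpa using this
  have hGK : algebraMap (Poly n) Rp G ∈ K := by
    rwa [← Ideal.Quotient.eq_zero_iff_mem]
  rw [hK, IsLocalization.mem_map_algebraMap_iff P.primeCompl Rp] at hGK
  obtain ⟨⟨y, t⟩, hyt⟩ := hGK
  rw [← map_mul, IsLocalization.eq_iff_exists P.primeCompl Rp] at hyt
  obtain ⟨c, hc⟩ := hyt
  refine ⟨(c : Poly n) * (t : Poly n), ?_, ?_⟩
  · exact (c * t : P.primeCompl).2
  · have : ((c : Poly n) * (t : Poly n)) * G = (c : Poly n) * (G * (t : Poly n)) := by ring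
    rw [this, hc]
    exact Ideal.mul_mem_left _ _ y.2
lemma subst1_emb (q : Poly N) : subst1 0 (emb q) = emb q := by
  induction q using MvPolynomial.induction_on with
  | C c => simp [subst1, emb]
  | add p q hp hq => simp [map_add, hp, hq]
  | mul_X p j hp =>
    rw [map_mul, map_mul, hp]
    have : emb (X j : Poly N) = (X j.succ : Poly (N + 1)) := by simp [emb]
    rw [this, subst1_X_of_ne (Fin.succ_ne_zero j)]

lemma geom_contra {X : Set (Pr (N + 1))} (hX : IsSubvariety X) (hp : pt0 N ∈ X)
    {g : Poly (N + 1)} {i : ℕ} (hgh : g.IsHomogeneous i)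
    (hnc : ¬ ∀ x ∈ X, VanishAt g x)
    (s : Poly (N + 1)) (hs : MvPolynomial.eval (e0vec N) s ≠ 0)
    (hsg : s * subst1 0 g ∈ affIdeal 0 X) : False := by
  classical
  set Hs := homog0 s with hHs
  set B := zeroLocus ({MvPolynomial.X 0 * Hs} : Set (Poly (N + 1))) with hB
  set A' := zeroLocus ({g} : Set (Poly (N + 1))) with hA'
  have hAalg : IsAlgSet A' := by
    refine ⟨{g}, ?_, rfl⟩
    rintro f hf
    rw [Set.mem_singleton_iff] at hf
    exact ⟨i, hf ▸ hgh⟩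
  have hBalg : IsAlgSet B := by
    refine ⟨{MvPolynomial.X 0 * Hs}, ?_, rfl⟩
    rintro f hf
    rw [Set.mem_singleton_iff] at hf
    exact ⟨1 + s.totalDegree, hf ▸ (isHomogeneous_X ℂ 0).mul (homog0_isHomogeneous s)⟩
  have hsub : X ⊆ A' ∪ B := by
    intro x hx
    by_cases hxB : x ∈ B
    · exact Or.inr hxB
    refine Or.inl ?_
    have hnv : ¬ VanishAt (MvPolynomial.X 0 * Hs) x := by
      intro hcon
      refine hxB ?_
      intro f hf
      rw [Set.mem_singleton_iff] at hf
      exact hf ▸ hcon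
    rw [VanishAt] at hnv
    push_neg at hnv
    obtain ⟨v, hv, hmk, hne⟩ := hnv
    rw [map_mul, eval_X] at hne
    have hv0 : v 0 ≠ 0 := fun h => hne (by rw [h, zero_mul])
    have hHsv : MvPolynomial.eval v Hs ≠ 0 := fun h => hne (by rw [h, mul_zero])
    set w : Fin (N + 1) → ℂ := (v 0)⁻¹ • v with hwdef
    have hw : w ≠ 0 := smul_ne_zero (inv_ne_zero hv0) hv
    have hw0 : w 0 = 1 := by
      simp [hwdef, inv_mul_cancel₀ hv0]
    have hmkw : Projectivization.mk ℂ w hw = x := by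
      rw [← hmk, Projectivization.mk_eq_mk_iff]
      exact ⟨Units.mk0 ((v 0)⁻¹) (inv_ne_zero hv0), rfl⟩
    have hwHs : MvPolynomial.eval w Hs ≠ 0 := by
      rw [hwdef, isHomog_eval_smul (homog0_isHomogeneous s)]
      exact mul_ne_zero (pow_ne_zero _ (inv_ne_zero hv0)) hHsv
    have hws : MvPolynomial.eval w s ≠ 0 := by
      rwa [homog0_eval_of_one hw0 s] at hwHs
    have hker : affIdeal 0 X ≤ RingHom.ker (MvPolynomial.eval w) := by
      rw [affIdeal, Ideal.span_le]
      rintro _ ⟨f', hf', rfl⟩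
      rw [SetLike.mem_coe, RingHom.mem_ker, eval_subst1_of_one hw0]
      obtain ⟨dd, hdd⟩ := Set.mem_iUnion.mp hf'
      exact hdd.2 x hx w hw hmkw
    have h0 : MvPolynomial.eval w (s * subst1 0 g) = 0 := by
      have := hker hsg
      rwa [RingHom.mem_ker] at this
    rw [map_mul, eval_subst1_of_one hw0] at h0
    have hwg : MvPolynomial.eval w g = 0 := by
      rcases mul_eq_zero.mp h0 with h | h
      · exact absurd h hws
      · exact h
    intro f hf
    rw [Set.mem_singleton_iff] at hf
    subst hf
    intro v' hv' hmk'
    have : Projectivization.mk ℂ v' hv' = Projectivization.mk ℂ w hw := by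
      rw [hmk', hmkw]
    rw [Projectivization.mk_eq_mk_iff] at this
    obtain ⟨c, hc⟩ := this
    rw [← hc]
    have : ((c : ℂ) • w) = (c : ℂ) • w := rfl
    rw [show ((c : ℂˣ) • w) = ((c : ℂ) • w) from rfl]
    rw [isHomog_eval_smul hgh, hwg, mul_zero]
  rcases hX.2.2 A' B hAalg hBalg hsub with hXA | hXB
  · refine hnc ?_
    intro x hx
    exact hXA hx g (Set.mem_singleton g)
  · have := hXB hp (MvPolynomial.X 0 * Hs) (Set.mem_singleton _)
    have h0 := this (e0vec N) (e0vec_ne N) rfl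
    rw [map_mul, eval_X] at h0
    have he0 : e0vec N 0 = 1 := rfl
    rw [he0, one_mul, homog0_eval_of_one he0 s] at h0
    exact hs h0
/-- order of vanishing of the truncated divisors.
Let `X ⊆ ℙ^N` contain `p = [1:0:⋯:0]`, let `d = d_p(X)` and let
`f = Σ_{i=1}^d x_0^{d-i} f^i ∈ H^0(ℙ^N, I_X ⊗ O(d))` with `f^i ∈ ℂ[x_1,…,x_N]`
homogeneous of degree `i`.  For `1 ≤ i ≤ d-1`, if the hypersurface
`D^i = (x_0^{i-1} f^1 + ⋯ + x_0 f^{i-1} + f^i = 0)` does not contain `X`, then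
the effective divisor `D^i|_X ∈ |O_X(i)|` satisfies `ord_p(D^i|_X) ≥ i + 1`. -/
theorem ord_of_partial_sum_divisor
    (N : ℕ) (X : Set (Pr (N + 1)))
    (hX : IsSubvariety X) (hp : pt0 N ∈ X)
    (d : ℕ) (hd : d = dP X (pt0 N))
    (fI : ℕ → Poly N) (hfI : ∀ i, (fI i).IsHomogeneous i)
    (hf : (∑ i ∈ Finset.Icc 1 d, MvPolynomial.X 0 ^ (d - i) * emb (fI i)) ∈ homVan X d)
    (i : ℕ) (hi1 : 1 ≤ i) (hid : i ≤ d - 1)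
    (g : Poly (N + 1))
    (hg : g = ∑ k ∈ Finset.Icc 1 i, MvPolynomial.X 0 ^ (i - k) * emb (fI k))
    (hnc : ¬ ∀ x ∈ X, VanishAt g x) :
    i + 1 ≤ ordAt X (pt0 N) g := by
  classical
  have hd' : i + 1 ≤ d := by omega
  -- g is homogeneous of degree i
  have hgh : g.IsHomogeneous i := by
    rw [hg]
    apply MvPolynomial.IsHomogeneous.sum
    intro k hk
    have hk' : 1 ≤ k ∧ k ≤ i := Finset.mem_Icc.mp hk
    have h1 : (MvPolynomial.X (0 : Fin (N + 1)) ^ (i - k) : Poly (N + 1)).IsHomogeneous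
        (i - k) := by
      simpa using (isHomogeneous_X ℂ (0 : Fin (N + 1))).pow (i - k)
    have h2 : (emb (fI k)).IsHomogeneous k := (hfI k).rename_isHomogeneous
    have := h1.mul h2
    have he : i - k + k = i := by omega
    rwa [he] at this
  set S : Set ℕ := {m | ∃ (j : Fin (N + 1)) (s : Poly (N + 1)), (pt0 N).rep j ≠ 0 ∧
    MvPolynomial.eval (acoord j (pt0 N)) s ≠ 0 ∧
    s * subst1 j g ∈ mIdeal (acoord j (pt0 N)) ^ m ⊔ affIdeal j X} with hS
  have hordS : ordAt X (pt0 N) g = sSup S := rfl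
  rw [hordS]
  -- the big sum is in the vanishing ideal
  have hfv : (∑ k ∈ Finset.Icc 1 d, MvPolynomial.X 0 ^ (d - k) * emb (fI k)) ∈ vanPolys X :=
    Set.mem_iUnion.mpr ⟨d, hf⟩
  have hIf : subst1 0 (∑ k ∈ Finset.Icc 1 d, MvPolynomial.X 0 ^ (d - k) * emb (fI k)) ∈
      affIdeal 0 X :=
    Ideal.subset_span (Set.mem_image_of_mem _ hfv)
  have hsubstF : subst1 0 (∑ k ∈ Finset.Icc 1 d, MvPolynomial.X 0 ^ (d - k) * emb (fI k)) =
      ∑ k ∈ Finset.Icc 1 d, emb (fI k) := by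
    rw [map_sum]
    apply Finset.sum_congr rfl
    intro k _
    rw [map_mul, map_pow, subst1_X_self, one_pow, one_mul, subst1_emb]
  have hsubstg : subst1 0 g = ∑ k ∈ Finset.Icc 1 i, emb (fI k) := by
    rw [hg, map_sum]
    apply Finset.sum_congr rfl
    intro k _
    rw [map_mul, map_pow, subst1_X_self, one_pow, one_mul, subst1_emb]
  -- split the sum
  have hdisj : Disjoint (Finset.Icc 1 i) (Finset.Ioc i d) := by
    rw [Finset.disjoint_left]
    intro k hk1 hk2
    rw [Finset.mem_Icc] at hk1
    rw [Finset.mem_Ioc] at hk2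
    omega
  have hunion : Finset.Icc 1 i ∪ Finset.Ioc i d = Finset.Icc 1 d := by
    ext k
    simp only [Finset.mem_union, Finset.mem_Icc, Finset.mem_Ioc]
    omega
  have hsplit : (∑ k ∈ Finset.Icc 1 d, emb (fI k)) =
      (∑ k ∈ Finset.Icc 1 i, emb (fI k)) + ∑ k ∈ Finset.Ioc i d, emb (fI k) := by
    rw [← Finset.sum_union hdisj, hunion]
  have htail : (∑ k ∈ Finset.Ioc i d, emb (fI k)) ∈ (mIdeal (e0vec N)) ^ (i + 1) := by
    apply Ideal.sum_mem
    intro k hk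
    rw [Finset.mem_Ioc] at hk
    exact Ideal.pow_le_pow_right (by omega) (emb_homog_mem_pow (hfI k))
  -- membership of i+1 in S
  have hSmem : (i + 1) ∈ S := by
    refine ⟨0, 1, pt0_rep_zero_ne N, ?_, ?_⟩
    · rw [acoord_pt0]; simp
    · rw [acoord_pt0, one_mul, hsubstg]
      have he : (∑ k ∈ Finset.Icc 1 i, emb (fI k)) =
          subst1 0 (∑ k ∈ Finset.Icc 1 d, MvPolynomial.X 0 ^ (d - k) * emb (fI k)) -
            ∑ k ∈ Finset.Ioc i d, emb (fI k) := by
        rw [hsubstF, hsplit]; ring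
      rw [he]
      exact Submodule.sub_mem _ (Submodule.mem_sup_right hIf)
        (Submodule.mem_sup_left htail)
  -- boundedness of S
  have hSbdd : BddAbove S := by
    by_contra hnb
    rw [not_bddAbove_iff] at hnb
    have hall : ∀ m : ℕ, ∃ s, s ∉ mIdeal (e0vec N) ∧
        s * subst1 0 g ∈ (mIdeal (e0vec N)) ^ m ⊔ affIdeal 0 X := by
      intro m
      obtain ⟨m', hm'S, hlt⟩ := hnb m
      obtain ⟨j, s, hj, hsev, hmem⟩ := hm'S
      have hj0 : j = 0 := by
        rcases Fin.eq_zero_or_eq_succ j with rfl | ⟨j', rfl⟩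
        · rfl
        · exact absurd (pt0_rep_succ N j') hj
      subst hj0
      rw [acoord_pt0] at hsev hmem
      refine ⟨s, fun h0 => hsev (eval_eq_zero_of_mem_mIdeal h0), ?_⟩
      exact (show (mIdeal (e0vec N)) ^ m' ⊔ affIdeal 0 X ≤ (mIdeal (e0vec N)) ^ m ⊔ affIdeal 0 X from
        sup_le_sup_right (Ideal.pow_le_pow_right hlt.le) _) hmem
    obtain ⟨s, hs, hsg⟩ := krull_extract (mIdeal (e0vec N)) (affIdeal 0 X)
      (mIdeal_isMaximal _) (subst1 0 g) hall
    exact geom_contra hX hp hgh hnc s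
      (fun h0 => hs (mem_mIdeal_iff.mpr h0)) hsg
  exact le_csSup hSbdd hSmem

end PaperSC
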